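/- Let B ≥ 1 and 0 < κ < π/2. Then x_+ and x_− are eigenvectors of the matrix P(κ) F_B P(κ) with eigenvalues λ_+ and λ_− respectively, where λ_± = (1/√B)·e^{iκ}·(±√(B − sin²κ) + i sin κ). Moreover λ_+ and λ_− are exactly the two roots of the quadratic equation λ² − (1/√B)(e^{2iκ} − 1)λ − e^{2iκ} = 0. -/

import Mathlib

open Matrix

private lemma sum_exp_eq_zero' (B : ℕ) (m : Fin B) (hm : (m:ℕ) ≠ 0) :
    ∑ k : Fin B, Complex.exp (2 * Real.pi * Complex.I * (m:ℕ) * (k:ℕ) / B) = 0 := by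
  have hB : (0:ℕ) < B := m.pos
  set z : ℂ := Complex.exp (2 * Real.pi * Complex.I * (m:ℕ) / B) with hz
  have hzk : ∀ k : Fin B, Complex.exp (2 * Real.pi * Complex.I * (m:ℕ) * (k:ℕ) / B) = z ^ (k:ℕ) := by
    intro k
    rw [hz, ← Complex.exp_nat_mul]
    ring_nf
  have hzB : z ^ B = 1 := by
    rw [hz, ← Complex.exp_nat_mul]
    have hB' : (B:ℂ) ≠ 0 := Nat.cast_ne_zero.mpr hB.ne'
    have : (B:ℂ) * (2 * Real.pi * Complex.I * (m:ℕ) / B) = (m:ℕ) * (2 * Real.pi * Complex.I) := by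
      field_simp
    rw [this]
    exact_mod_cast Complex.exp_int_mul_two_pi_mul_I (m:ℕ)
  have hz1 : z ≠ 1 := by
    intro h
    rw [hz, Complex.exp_eq_one_iff] at h
    obtain ⟨n, hn⟩ := h
    have hB' : (B:ℂ) ≠ 0 := Nat.cast_ne_zero.mpr hB.ne'
    have hI : (2 * Real.pi * Complex.I : ℂ) ≠ 0 := by
      simp [Complex.I_ne_zero, Real.pi_ne_zero]
    have hmc : ((m:ℕ):ℂ) = n * B := by
      field_simp at hn
      exact mul_left_cancel₀ hI (by linear_combination (2 * Real.pi * Complex.I) * hn)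
    have hmz : ((m:ℕ):ℤ) = n * B := by exact_mod_cast hmc
    have h1 : ((m:ℕ):ℤ) < B := by exact_mod_cast m.2
    have h2 : (0:ℤ) < (m:ℕ) := by exact_mod_cast Nat.pos_of_ne_zero hm
    rcases le_or_gt n 0 with h | h
    · have : n * (B:ℤ) ≤ 0 := mul_nonpos_of_nonpos_of_nonneg h (by positivity)
      omega
    · have : (B:ℤ) ≤ n * B := le_mul_of_one_le_left (by positivity) h
      omega
  calc ∑ k : Fin B, Complex.exp (2 * Real.pi * Complex.I * (m:ℕ) * (k:ℕ) / B)
      = ∑ k : Fin B, z ^ (k:ℕ) := Finset.sum_congr rfl fun k _ => hzk k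
    _ = ∑ k ∈ Finset.range B, z ^ k := Fin.sum_univ_eq_sum_range _ _
    _ = (z ^ B - 1) / (z - 1) := geom_sum_eq hz1 B
    _ = 0 := by rw [hzB]; simp



noncomputable section

/-- The `B × B` Fourier transform matrix. -/
def fourierMat (B : ℕ) : Matrix (Fin B) (Fin B) ℂ :=
  Matrix.of fun j k =>
    (1 / Real.sqrt B : ℝ) *
      Complex.exp (2 * Real.pi * Complex.I * (j : ℕ) * (k : ℕ) / B)

/-- `P(κ) = diag(e^{iκ}, 1, …, 1)`. -/
def Pmat (B : ℕ) (κ : ℝ) : Matrix (Fin B) (Fin B) ℂ :=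
  Matrix.diagonal fun m => if (m : ℕ) = 0 then Complex.exp (Complex.I * κ) else 1

/-- The vector `x_±` (sign `ε = ±1`): first component `cos κ ± √(B − sin²κ)`,
all other components `1`. -/
def xvec (B : ℕ) (κ ε : ℝ) : Fin B → ℂ := fun m =>
  if (m : ℕ) = 0 then
    ((Real.cos κ + ε * Real.sqrt ((B : ℝ) - Real.sin κ ^ 2) : ℝ) : ℂ)
  else 1

/-- The eigenvalue `λ_± = (1/√B) e^{iκ} (± √(B − sin²κ) + i sin κ)`. -/
def lamF (B : ℕ) (κ ε : ℝ) : ℂ :=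
  ((1 / Real.sqrt B : ℝ) : ℂ) * Complex.exp (Complex.I * κ) *
    ((ε : ℂ) * ((Real.sqrt ((B : ℝ) - Real.sin κ ^ 2) : ℝ) : ℂ) +
      Complex.I * ((Real.sin κ : ℝ) : ℂ))

/-- `x_±` are eigenvectors of `P(κ) F_B P(κ)` with eigenvalues
`λ_±`, and `λ_±` are exactly the two roots of
`λ² − (1/√B)(e^{2iκ} − 1)λ − e^{2iκ} = 0`. -/
theorem fourier_perturbed_eigenvectors (B : ℕ) (hB : 1 ≤ B)
    (κ : ℝ) (hκ0 : 0 < κ) (hκ1 : κ < Real.pi / 2) :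
    (∀ ε : ℝ, ε = 1 ∨ ε = -1 →
      (Pmat B κ * fourierMat B * Pmat B κ).mulVec (xvec B κ ε) =
        lamF B κ ε • xvec B κ ε) ∧
    (∀ lam : ℂ,
      lam ^ 2 - ((1 / Real.sqrt B : ℝ) : ℂ) *
          (Complex.exp (2 * Complex.I * κ) - 1) * lam -
        Complex.exp (2 * Complex.I * κ) = 0 ↔
      lam = lamF B κ 1 ∨ lam = lamF B κ (-1)) := by
  have hNZ : NeZero B := ⟨by omega⟩
  have hB1 : (1:ℝ) ≤ B := by exact_mod_cast hB
  have hsB : Real.sqrt B * Real.sqrt B = B := Real.mul_self_sqrt (by linarith)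
  have hs1 : Real.sin κ ^ 2 ≤ 1 := Real.sin_sq_le_one κ
  have hr2c : ((Real.sqrt ((B:ℝ) - Real.sin κ ^ 2) : ℝ):ℂ) ^ 2
      = (B:ℂ) - ((Real.sin κ : ℝ):ℂ) ^ 2 := by
    exact_mod_cast Real.sq_sqrt (by linarith : (0:ℝ) ≤ (B:ℝ) - Real.sin κ ^ 2)
  have hsc : ((Real.sin κ : ℝ):ℂ) ^ 2 + ((Real.cos κ : ℝ):ℂ) ^ 2 = 1 := by
    exact_mod_cast Real.sin_sq_add_cos_sq κ
  have hI2 : Complex.I ^ 2 = -1 := Complex.I_sq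
  have hE : Complex.exp (Complex.I * κ) = (Real.cos κ : ℂ) + (Real.sin κ : ℂ) * Complex.I := by
    rw [mul_comm, Complex.exp_mul_I, Complex.ofReal_cos, Complex.ofReal_sin]
  have hE2 : Complex.exp (2 * Complex.I * κ) = Complex.exp (Complex.I * κ) ^ 2 := by
    rw [← Complex.exp_nat_mul]; ring_nf
  have hqr : ((1:ℝ)/Real.sqrt B) * (1/Real.sqrt B) * B = 1 := by
    rw [div_mul_div_comm, one_mul, hsB]
    field_simp
  have hq : ((1 / Real.sqrt B : ℝ) : ℂ) * ((1 / Real.sqrt B : ℝ) : ℂ) * (B:ℂ) = 1 := by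
    exact_mod_cast hqr
  constructor
  · intro ε hε
    have hε2 : (ε:ℂ) ^ 2 = 1 := by rcases hε with rfl | rfl <;> norm_num
    funext m
    have hentry : ∀ i j : Fin B, (Pmat B κ * fourierMat B * Pmat B κ) i j =
        (if (i:ℕ) = 0 then Complex.exp (Complex.I * κ) else 1) * fourierMat B i j *
        (if (j:ℕ) = 0 then Complex.exp (Complex.I * κ) else 1) := by
      intro i j
      simp [Pmat, Matrix.diagonal_mul, Matrix.mul_diagonal]
    rw [Matrix.mulVec, Pi.smul_apply, smul_eq_mul]
    rw [show (Pmat B κ * fourierMat B * Pmat B κ) m ⬝ᵥ xvec B κ ε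
        = ∑ k : Fin B, (Pmat B κ * fourierMat B * Pmat B κ) m k * xvec B κ ε k from rfl]
    simp only [hentry]
    rw [Finset.sum_eq_sum_sdiff_singleton_add (Finset.mem_univ (0 : Fin B))]
    have hdiff : ∀ k ∈ (Finset.univ : Finset (Fin B)) \ {0},
        (if (m:ℕ) = 0 then Complex.exp (Complex.I * κ) else 1) * fourierMat B m k *
          (if (k:ℕ) = 0 then Complex.exp (Complex.I * κ) else 1) * xvec B κ ε k
        = (if (m:ℕ) = 0 then Complex.exp (Complex.I * κ) else 1) * fourierMat B m k := by
      intro k hk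
      have hk0 : (k:ℕ) ≠ 0 := by
        simp only [Finset.mem_sdiff, Finset.mem_singleton] at hk
        exact fun h => hk.2 (Fin.ext (by simpa using h))
      simp [hk0, xvec]
    rw [Finset.sum_congr rfl hdiff]
    have hsumF : ∑ k ∈ (Finset.univ : Finset (Fin B)) \ {0}, fourierMat B m k
        = (∑ k : Fin B, fourierMat B m k) - fourierMat B m 0 := by
      rw [Finset.sum_sdiff_eq_sub (Finset.singleton_subset_iff.mpr (Finset.mem_univ 0)),
        Finset.sum_singleton]
    rw [← Finset.mul_sum, hsumF]
    have hx0 : xvec B κ ε 0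
        = (Real.cos κ : ℂ) + (ε:ℂ) * ((Real.sqrt ((B:ℝ) - Real.sin κ ^ 2) : ℝ):ℂ) := by
      simp [xvec, Complex.ofReal_add, Complex.ofReal_mul]
    by_cases hm : (m:ℕ) = 0
    · have hF : ∀ k : Fin B, fourierMat B m k = ((1 / Real.sqrt B : ℝ) : ℂ) := by
        intro k
        simp [fourierMat, hm]
      have hall : ∑ k : Fin B, fourierMat B m k = (B:ℂ) * ((1 / Real.sqrt B : ℝ) : ℂ) := by
        simp [hF, Finset.sum_const, Finset.card_univ, nsmul_eq_mul]
      have hxm : xvec B κ ε m = xvec B κ ε 0 := by simp [xvec, hm]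
      rw [hall, hF, hxm, hx0]
      simp only [hm, if_pos, lamF, Fin.val_zero, ite_true, hE]
      linear_combination
        (((1 / Real.sqrt B : ℝ) : ℂ) * (((Real.cos κ:ℝ):ℂ) + ((Real.sin κ:ℝ):ℂ) * Complex.I)) * hsc
        - (((1 / Real.sqrt B : ℝ) : ℂ) * (((Real.cos κ:ℝ):ℂ) + ((Real.sin κ:ℝ):ℂ) * Complex.I)
            * ((Real.sqrt ((B:ℝ) - Real.sin κ ^ 2) : ℝ):ℂ)^2) * hε2
        - (((1 / Real.sqrt B : ℝ) : ℂ) * (((Real.cos κ:ℝ):ℂ) + ((Real.sin κ:ℝ):ℂ) * Complex.I)) * hr2c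
    · have hall : ∑ k : Fin B, fourierMat B m k = 0 := by
        have hFk : ∀ k : Fin B, fourierMat B m k
            = ((1 / Real.sqrt B : ℝ) : ℂ)
              * Complex.exp (2 * Real.pi * Complex.I * (m:ℕ) * (k:ℕ) / B) := by
          intro k; simp [fourierMat]
        rw [Finset.sum_congr rfl fun k _ => hFk k, ← Finset.mul_sum,
          sum_exp_eq_zero' B m hm, mul_zero]
      have hF0 : fourierMat B m 0 = ((1 / Real.sqrt B : ℝ) : ℂ) := by
        simp [fourierMat]
      have hxm : xvec B κ ε m = 1 := by simp [xvec, hm]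
      rw [hall, hF0, hxm, hx0]
      simp only [hm, if_neg, ite_false, lamF, Fin.val_zero, ite_true, hE]
      linear_combination ((1 / Real.sqrt B : ℝ) : ℂ) * hsc
        - ((1 / Real.sqrt B : ℝ) : ℂ) * ((Real.sin κ:ℝ):ℂ)^2 * hI2
  · have hsum : lamF B κ 1 + lamF B κ (-1)
        = ((1 / Real.sqrt B : ℝ) : ℂ) * (Complex.exp (2 * Complex.I * κ) - 1) := by
      simp only [lamF, hE2, hE, Complex.ofReal_one, Complex.ofReal_neg]
      linear_combination ((1 / Real.sqrt B : ℝ) : ℂ) * ((Real.sin κ : ℝ):ℂ)^2 * hI2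
        - ((1 / Real.sqrt B : ℝ) : ℂ) * hsc
    have hprod : lamF B κ 1 * lamF B κ (-1) = - Complex.exp (2 * Complex.I * κ) := by
      simp only [lamF, hE2, Complex.ofReal_one, Complex.ofReal_neg]
      linear_combination ((1 / Real.sqrt B : ℝ) : ℂ)^2 * Complex.exp (Complex.I * κ)^2 *
          ((Real.sin κ : ℝ):ℂ)^2 * hI2
        - ((1 / Real.sqrt B : ℝ) : ℂ)^2 * Complex.exp (Complex.I * κ)^2 * hr2c
        - Complex.exp (Complex.I * κ)^2 * hq
    intro lam
    constructor
    · intro h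
      have hfac : (lam - lamF B κ 1) * (lam - lamF B κ (-1)) = 0 := by
        linear_combination h - lam * hsum + hprod
      rcases mul_eq_zero.mp hfac with h' | h'
      · exact Or.inl (sub_eq_zero.mp h')
      · exact Or.inr (sub_eq_zero.mp h')
    · rintro (rfl | rfl)
      · linear_combination lamF B κ 1 * hsum - hprod
      · linear_combination lamF B κ (-1) * hsum - hprod


end
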